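/- arXiv:2509.13522 — 8 statements merged into one kernel-verified Lean document; each statement's English description precedes it below -/
import Mathlib

section
/- Let g be a metric Lie algebra with Levi-Civita product ∇ given by the Koszul formula, and for ξ ∈ g define (L_ξ∇)(v,w) := [ξ, ∇_v w] − ∇_{[ξ,v]} w − ∇_v [ξ,w]. Then for all v, w ∈ g, (L_ξ∇)(v,w) = (1/2)( K_v([ξ,w]) + K_w([ξ,v]) − [ξ, K_v(w)] ), where K_v(w) = ad*_v(w) + ad*_w(v). -/
local notation "⟪" x ", " y "⟫" => @inner ℝ _ _ x y

/-- `(L_ξ∇)(v,w) = (1/2)(K_v([ξ,w]) + K_w([ξ,v]) − [ξ, K_v(w)])`. -/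
theorem stmt_4
    {g : Type*} [NormedAddCommGroup g] [InnerProductSpace ℝ g] [FiniteDimensional ℝ g]
    (b : g →ₗ[ℝ] g →ₗ[ℝ] g)
    (hskew : ∀ x y, b x y = - b y x)
    (hjac : ∀ x y z, b x (b y z) = b (b x y) z + b y (b x z))
    (nab : g → g → g)
    (hkoszul : ∀ x y z, 2 * ⟪nab x y, z⟫ = ⟪b x y, z⟫ - ⟪b y z, x⟫ + ⟪b z x, y⟫)
    (adStar : g → g → g)
    (hadStar : ∀ x y z, ⟪adStar x y, z⟫ = ⟪y, b x z⟫)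
    (K : g → g → g)
    (hKdef : ∀ v w, K v w = adStar v w + adStar w v)
    (ξ : g) :
    ∀ v w, b ξ (nab v w) - nab (b ξ v) w - nab v (b ξ w)
      = (1/2 : ℝ) • (K v (b ξ w) + K w (b ξ v) - b ξ (K v w)) := by
  intro v w
  apply ext_inner_right ℝ
  intro z
  have hbz : ∀ u : g, ⟪b ξ u, z⟫ = ⟪u, adStar ξ z⟫ := by
    intro u
    rw [real_inner_comm z ((b ξ) u), ← hadStar, real_inner_comm]
  set A := adStar ξ z with hA'
  have hJ : ⟪b v w, A⟫ = ⟪b (b ξ v) w, z⟫ + ⟪b v (b ξ w), z⟫ := by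
    rw [real_inner_comm, hA', hadStar, hjac, inner_add_right,
      real_inner_comm z, real_inner_comm z]
  have hk1 := hkoszul v w A
  have hk2 := hkoszul (b ξ v) w z
  have hk3 := hkoszul v (b ξ w) z
  have c1 : ⟪b w A, v⟫ = ⟪v, b w A⟫ := real_inner_comm _ _
  have c2 : ⟪b A v, w⟫ = -⟪w, b v A⟫ := by
    rw [hskew A v, inner_neg_left, real_inner_comm]
  have c3 : ⟪b w z, b ξ v⟫ = ⟪b ξ v, b w z⟫ := real_inner_comm _ _
  have c4 : ⟪b z (b ξ v), w⟫ = -⟪w, b (b ξ v) z⟫ := by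
    rw [hskew z, inner_neg_left, real_inner_comm]
  have c5 : ⟪b (b ξ w) z, v⟫ = ⟪v, b (b ξ w) z⟫ := real_inner_comm _ _
  have c6 : ⟪b z v, b ξ w⟫ = -⟪b ξ w, b v z⟫ := by
    rw [hskew z v, inner_neg_left, real_inner_comm]
  simp only [hKdef, map_add, inner_sub_left, inner_add_left, real_inner_smul_left,
    hbz, hadStar]
  linarith
end

section
/- Let g = A_{5,4} be the 5-dimensional metric Lie algebra with orthonormal basis v1,…,v5 and nonzero brackets [v1,v3] = α v5, [v1,v4] = β v5, [v2,v3] = γ v5, with β, γ > 0 and α ∈ ℝ. A vector ξ = Σ ξ_i v_i is affine (i.e. (L_ξ∇) = 0 for the Levi-Civita product ∇) if and only if ξ1 = ξ2 = ξ3 = ξ4 = 0, i.e. ξ ∈ Z(g) = span{v5}. -/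
local notation "⟪" x ", " y "⟫" => @inner ℝ _ _ x y

/-- The underlying space `ℝ⁵`. -/
abbrev V := EuclideanSpace ℝ (Fin 5)

/-- The standard orthonormal basis; `e 0,…,e 4` play the roles of `v1,…,v5`. -/
noncomputable def e (i : Fin 5) : V := EuclideanSpace.single i 1

/-- The structure-constant matrix of `A_{5,4}`. -/
def Bm (α β γ : ℝ) : Fin 5 → Fin 5 → ℝ :=
  ![![0,0,α,β,0], ![0,0,γ,0,0], ![-α,-γ,0,0,0], ![-β,0,0,0,0], ![0,0,0,0,0]]

lemma esum (x : V) : x = ∑ i, x i • e i := by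
  have h := (EuclideanSpace.basisFun (Fin 5) ℝ).toBasis.sum_repr x
  simp only [EuclideanSpace.basisFun_repr, OrthonormalBasis.coe_toBasis,
    EuclideanSpace.basisFun_apply] at h
  exact h.symm

lemma inner_e (x : V) (i : Fin 5) : ⟪x, e i⟫ = x i := by
  simp [e, EuclideanSpace.inner_single_right]

lemma inner_e' (x : V) (i : Fin 5) : ⟪e i, x⟫ = x i := by
  rw [real_inner_comm]; exact inner_e x i

lemma subap (u v : V) (k : Fin 5) : (u - v) k = u k - v k := rfl

lemma inner_zero_vec (u : V) (h : ∀ z : V, ⟪u, z⟫ = 0) : u = 0 := by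
  have := h u
  rwa [inner_self_eq_zero] at this

set_option maxHeartbeats 2000000 in
/-- on `A_{5,4}` (brackets `[v1,v3]=αv5`, `[v1,v4]=βv5`, `[v2,v3]=γv5`,
`β,γ>0`), `ξ` is affine iff `ξ1=ξ2=ξ3=ξ4=0`, i.e. `ξ ∈ Z(g) = span{v5}`. -/
theorem stmt_10
    (α β γ : ℝ) (hβ : 0 < β) (hγ : 0 < γ)
    (b : V →ₗ[ℝ] V →ₗ[ℝ] V)
    (hskew : ∀ x y, b x y = - b y x)
    (h13 : b (e 0) (e 2) = α • e 4)
    (h14 : b (e 0) (e 3) = β • e 4)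
    (h23 : b (e 1) (e 2) = γ • e 4)
    (hzero : ∀ i j : Fin 5, i < j →
      (i, j) ∉ ({(0, 2), (0, 3), (1, 2)} : Set (Fin 5 × Fin 5)) → b (e i) (e j) = 0)
    (nab : V → V → V)
    (hkoszul : ∀ x y z, 2 * ⟪nab x y, z⟫ = ⟪b x y, z⟫ - ⟪b y z, x⟫ + ⟪b z x, y⟫)
    (ξ : V) :
    (∀ v w, b ξ (nab v w) - nab (b ξ v) w - nab v (b ξ w) = 0) ↔
      (ξ 0 = 0 ∧ ξ 1 = 0 ∧ ξ 2 = 0 ∧ ξ 3 = 0) := by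
  -- the bracket vanishes on the diagonal
  have bself : ∀ x, b x x = 0 := by
    intro x
    have h : b x x + b x x = 0 := by nth_rewrite 2 [hskew x x]; abel
    calc b x x = (2:ℝ)⁻¹ • (b x x + b x x) := by
          rw [← two_smul ℝ, smul_smul]; norm_num
    _ = 0 := by rw [h, smul_zero]
  have hz' : ∀ i j : Fin 5, i < j → (i,j) ≠ ((0:Fin 5),(2:Fin 5)) → (i,j) ≠ (0,3) →
      (i,j) ≠ (1,2) → b (e i) (e j) = 0 := by
    intro i j h h1 h2 h3
    exact hzero i j h (by simp [h1, h2, h3])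
  -- the full bracket table
  have btab : ∀ i j, b (e i) (e j) = Bm α β γ i j • e 4 := by
    intro i j
    fin_cases i <;> fin_cases j <;>
      simp only [show (⟨0, by omega⟩ : Fin 5) = 0 from rfl,
        show (⟨1, by omega⟩ : Fin 5) = 1 from rfl,
        show (⟨2, by omega⟩ : Fin 5) = 2 from rfl,
        show (⟨3, by omega⟩ : Fin 5) = 3 from rfl,
        show (⟨4, by omega⟩ : Fin 5) = 4 from rfl] <;>
      first
        | (rw [bself]; simp [Bm, Matrix.vecHead, Matrix.vecTail])
        | (rw [h13]; simp [Bm, Matrix.vecHead, Matrix.vecTail])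
        | (rw [h14]; simp [Bm, Matrix.vecHead, Matrix.vecTail])
        | (rw [h23]; simp [Bm, Matrix.vecHead, Matrix.vecTail])
        | (rw [hskew, h13]; simp [Bm, Matrix.vecHead, Matrix.vecTail])
        | (rw [hskew, h14]; simp [Bm, Matrix.vecHead, Matrix.vecTail])
        | (rw [hskew, h23]; simp [Bm, Matrix.vecHead, Matrix.vecTail])
        | (rw [hz' _ _ (by decide) (by decide) (by decide) (by decide)];
            simp [Bm, Matrix.vecHead, Matrix.vecTail])
        | (rw [hskew, hz' _ _ (by decide) (by decide) (by decide) (by decide)];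
            simp [Bm, Matrix.vecHead, Matrix.vecTail])
  -- the general coordinate formula for the bracket
  have bexp : ∀ x y : V, b x y = (∑ i, ∑ j, x i * y j * Bm α β γ i j) • e 4 := by
    intro x y
    nth_rewrite 1 [esum x]
    nth_rewrite 1 [esum y]
    rw [map_sum, show (∑ i, ∑ j, x i * y j * Bm α β γ i j)
        = ∑ j, ∑ i, x i * y j * Bm α β γ i j from Finset.sum_comm, Finset.sum_smul]
    refine Finset.sum_congr rfl fun j _ => ?_
    rw [map_smul, map_sum, LinearMap.sum_apply, Finset.smul_sum, Finset.sum_smul]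
    refine Finset.sum_congr rfl fun i _ => ?_
    rw [LinearMap.map_smul₂, btab, smul_smul, smul_smul]
    congr 1
    ring
  -- the coordinate formula for the connection
  have nabc : ∀ x y (k : Fin 5),
      (nab x y) k = 2⁻¹ * ((b x y) k - ⟪b y (e k), x⟫ + ⟪b (e k) x, y⟫) := by
    intro x y k
    have h := hkoszul x y (e k)
    rw [inner_e, inner_e] at h
    linarith
  constructor
  · -- forward direction
    intro H
    have h0 := congrArg (fun v : V => v 4) (H (e 0) (e 4))
    have h1 := congrArg (fun v : V => v 4) (H (e 1) (e 4))
    have h2 := congrArg (fun v : V => v 4) (H (e 2) (e 4))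
    have h3 := congrArg (fun v : V => v 4) (H (e 3) (e 4))
    simp only [subap] at h0 h1 h2 h3
    simp only [nabc, bexp] at h0
    simp only [nabc, bexp] at h1
    simp only [nabc, bexp] at h2
    simp only [nabc, bexp] at h3
    simp [Fin.sum_univ_five, e, EuclideanSpace.single_apply, Bm,
      Matrix.vecHead, Matrix.vecTail, inner_e, inner_e', real_inner_smul_left] at h0
    simp [Fin.sum_univ_five, e, EuclideanSpace.single_apply, Bm,
      Matrix.vecHead, Matrix.vecTail, inner_e, inner_e', real_inner_smul_left] at h1
    simp [Fin.sum_univ_five, e, EuclideanSpace.single_apply, Bm,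
      Matrix.vecHead, Matrix.vecTail, inner_e, inner_e', real_inner_smul_left] at h2
    simp [Fin.sum_univ_five, e, EuclideanSpace.single_apply, Bm,
      Matrix.vecHead, Matrix.vecTail, inner_e, inner_e', real_inner_smul_left] at h3
    ring_nf at h0 h1 h2 h3
    -- h0 : ξ 0 * α ^ 2 * (-1 / 2) + ξ 0 * β ^ 2 * (-1 / 2) + α * ξ 1 * γ * (-1 / 2) = 0
    have hβ' := hβ.ne'
    have hγ' := hγ.ne'
    have e1 : α * ξ 0 + γ * ξ 1 = 0 := by
      have h : γ * (α * ξ 0 + γ * ξ 1) = 0 := by linear_combination (-2) * h1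
      exact (mul_eq_zero.mp h).resolve_left hγ'
    have e0 : ξ 0 = 0 := by
      have hb2 : β ^ 2 * ξ 0 = 0 := by linear_combination (-2) * h0 - α * e1
      exact (mul_eq_zero.mp hb2).resolve_left (pow_ne_zero 2 hβ')
    have e1' : ξ 1 = 0 := by
      have h : γ * ξ 1 = 0 := by linear_combination e1 - α * e0
      exact (mul_eq_zero.mp h).resolve_left hγ'
    have e4 : α * ξ 2 + β * ξ 3 = 0 := by
      have h : β * (α * ξ 2 + β * ξ 3) = 0 := by linear_combination (-2) * h3
      exact (mul_eq_zero.mp h).resolve_left hβ'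
    have e2 : ξ 2 = 0 := by
      have hb2 : γ ^ 2 * ξ 2 = 0 := by linear_combination (-2) * h2 - α * e4
      exact (mul_eq_zero.mp hb2).resolve_left (pow_ne_zero 2 hγ')
    have e3 : ξ 3 = 0 := by
      have h : β * ξ 3 = 0 := by linear_combination e4 - α * e2
      exact (mul_eq_zero.mp h).resolve_left hβ'
    exact ⟨e0, e1', e2, e3⟩
  · -- backward direction
    rintro ⟨z0, z1, z2, z3⟩ v w
    have hξ : ξ = ξ 4 • e 4 := by
      refine PiLp.ext fun i => ?_
      fin_cases i <;>
        simp only [show (⟨0, by omega⟩ : Fin 5) = 0 from rfl,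
          show (⟨1, by omega⟩ : Fin 5) = 1 from rfl,
          show (⟨2, by omega⟩ : Fin 5) = 2 from rfl,
          show (⟨3, by omega⟩ : Fin 5) = 3 from rfl,
          show (⟨4, by omega⟩ : Fin 5) = 4 from rfl] <;>
        simp [e, EuclideanSpace.single_apply, z0, z1, z2, z3]
    have bleft4 : ∀ y : V, b (e 4) y = 0 := by
      intro y
      rw [bexp]
      simp [Fin.sum_univ_five, e, EuclideanSpace.single_apply, Bm,
        Matrix.vecHead, Matrix.vecTail]
    have bξ0 : ∀ z, b ξ z = 0 := by
      intro z
      rw [hξ, LinearMap.map_smul₂, bleft4, smul_zero]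
    have nab0l : ∀ y, nab (0 : V) y = 0 := by
      intro y
      refine inner_zero_vec _ fun z => ?_
      have h := hkoszul 0 y z
      simp only [map_zero, LinearMap.zero_apply, inner_zero_left, inner_zero_right] at h
      linarith
    have nab0r : ∀ x, nab x (0 : V) = 0 := by
      intro x
      refine inner_zero_vec _ fun z => ?_
      have h := hkoszul x 0 z
      simp only [map_zero, LinearMap.zero_apply, inner_zero_left, inner_zero_right] at h
      linarith
    rw [bξ0, bξ0, bξ0, nab0l, nab0r]
    simp
end

section
/- Let g = A_{4,1} ⊕ A_1 (type I) be the 5-dimensional metric Lie algebra with orthonormal basis v1,…,v5 and nonzero brackets [v1,v2] = α v3 + γ v5, [v1,v3] = β v5, with α, β > 0 and γ ∈ ℝ. Then ξ = Σ ξ_i v_i is affine if and only if ξ1 = ξ2 = ξ3 = 0, i.e. ξ ∈ Z(g) = span{v4, v5}. -/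
local notation "⟪" x ", " y "⟫" => @inner ℝ _ _ x y

set_option maxHeartbeats 2000000 in
/-- on `A_{4,1} ⊕ A_1` (type I) (brackets `[v1,v2]=αv3+γv5`,
`[v1,v3]=βv5`, `α,β>0`), `ξ` is affine iff `ξ1=ξ2=ξ3=0`,
i.e. `ξ ∈ Z(g) = span{v4,v5}`. -/
theorem stmt_11
    (α β γ : ℝ) (hα : 0 < α) (hβ : 0 < β)
    (b : V →ₗ[ℝ] V →ₗ[ℝ] V)
    (hskew : ∀ x y, b x y = - b y x)
    (h12 : b (e 0) (e 1) = α • e 2 + γ • e 4)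
    (h13 : b (e 0) (e 2) = β • e 4)
    (hzero : ∀ i j : Fin 5, i < j →
      (i, j) ∉ ({(0, 1), (0, 2)} : Set (Fin 5 × Fin 5)) → b (e i) (e j) = 0)
    (nab : V → V → V)
    (hkoszul : ∀ x y z, 2 * ⟪nab x y, z⟫ = ⟪b x y, z⟫ - ⟪b y z, x⟫ + ⟪b z x, y⟫)
    (ξ : V) :
    (∀ v w, b ξ (nab v w) - nab (b ξ v) w - nab v (b ξ w) = 0) ↔
      (ξ 0 = 0 ∧ ξ 1 = 0 ∧ ξ 2 = 0) := by
  have hdiag : ∀ i : Fin 5, b (e i) (e i) = 0 := by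
    intro i
    have h := hskew (e i) (e i)
    have h2 : (2:ℝ) • b (e i) (e i) = 0 := by
      rw [two_smul]; nth_rewrite 2 [h]; abel
    simpa using (smul_eq_zero.mp h2).resolve_left (by norm_num)
  have hzero' : ∀ i j : Fin 5, (i,j) ≠ (0,1) → (i,j) ≠ (1,0) → (i,j) ≠ (0,2) → (i,j) ≠ (2,0) →
      b (e i) (e j) = 0 := by
    intro i j h1 h2 h3 h4
    rcases lt_trichotomy i j with h|h|h
    · refine hzero i j h ?_
      simp only [Set.mem_insert_iff, Set.mem_singleton_iff]
      push_neg; exact ⟨h1, h3⟩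
    · subst h; exact hdiag i
    · rw [hskew, hzero j i h ?_, neg_zero]
      simp only [Set.mem_insert_iff, Set.mem_singleton_iff]
      push_neg
      constructor
      · intro hc; exact h2 (by rw [Prod.ext_iff] at hc ⊢; exact ⟨hc.2, hc.1⟩)
      · intro hc; exact h4 (by rw [Prod.ext_iff] at hc ⊢; exact ⟨hc.2, hc.1⟩)
  have hb01 : b (e 0) (e 1) = α • e 2 + γ • e 4 := h12
  have hb02 : b (e 0) (e 2) = β • e 4 := h13
  have hb10 : b (e 1) (e 0) = -(α • e 2 + γ • e 4) := by rw [hskew, h12]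
  have hb20 : b (e 2) (e 0) = -(β • e 4) := by rw [hskew, h13]
  have zb00 : b (e 0) (e 0) = 0 := hzero' 0 0 (by decide) (by decide) (by decide) (by decide)
  have zb03 : b (e 0) (e 3) = 0 := hzero' 0 3 (by decide) (by decide) (by decide) (by decide)
  have zb04 : b (e 0) (e 4) = 0 := hzero' 0 4 (by decide) (by decide) (by decide) (by decide)
  have zb11 : b (e 1) (e 1) = 0 := hzero' 1 1 (by decide) (by decide) (by decide) (by decide)
  have zb12 : b (e 1) (e 2) = 0 := hzero' 1 2 (by decide) (by decide) (by decide) (by decide)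
  have zb13 : b (e 1) (e 3) = 0 := hzero' 1 3 (by decide) (by decide) (by decide) (by decide)
  have zb14 : b (e 1) (e 4) = 0 := hzero' 1 4 (by decide) (by decide) (by decide) (by decide)
  have zb21 : b (e 2) (e 1) = 0 := hzero' 2 1 (by decide) (by decide) (by decide) (by decide)
  have zb22 : b (e 2) (e 2) = 0 := hzero' 2 2 (by decide) (by decide) (by decide) (by decide)
  have zb23 : b (e 2) (e 3) = 0 := hzero' 2 3 (by decide) (by decide) (by decide) (by decide)
  have zb24 : b (e 2) (e 4) = 0 := hzero' 2 4 (by decide) (by decide) (by decide) (by decide)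
  have zb30 : b (e 3) (e 0) = 0 := hzero' 3 0 (by decide) (by decide) (by decide) (by decide)
  have zb31 : b (e 3) (e 1) = 0 := hzero' 3 1 (by decide) (by decide) (by decide) (by decide)
  have zb32 : b (e 3) (e 2) = 0 := hzero' 3 2 (by decide) (by decide) (by decide) (by decide)
  have zb33 : b (e 3) (e 3) = 0 := hzero' 3 3 (by decide) (by decide) (by decide) (by decide)
  have zb34 : b (e 3) (e 4) = 0 := hzero' 3 4 (by decide) (by decide) (by decide) (by decide)
  have zb40 : b (e 4) (e 0) = 0 := hzero' 4 0 (by decide) (by decide) (by decide) (by decide)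
  have zb41 : b (e 4) (e 1) = 0 := hzero' 4 1 (by decide) (by decide) (by decide) (by decide)
  have zb42 : b (e 4) (e 2) = 0 := hzero' 4 2 (by decide) (by decide) (by decide) (by decide)
  have zb43 : b (e 4) (e 3) = 0 := hzero' 4 3 (by decide) (by decide) (by decide) (by decide)
  have zb44 : b (e 4) (e 4) = 0 := hzero' 4 4 (by decide) (by decide) (by decide) (by decide)
  have hco : ∀ (x y : V) (k : Fin 5),
      nab x y k = ((b x y) k - ⟪b y (e k), x⟫ + ⟪b (e k) x, y⟫)/2 := by
    intro x y k
    have h := hkoszul x y (e k)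
    have h1 : ⟪nab x y, e k⟫ = nab x y k := by
      simp [e, PiLp.inner_apply, EuclideanSpace.single_apply]
    have h2 : ⟪b x y, e k⟫ = (b x y) k := by
      simp [e, PiLp.inner_apply, EuclideanSpace.single_apply]
    rw [h1, h2] at h
    linarith
  have kcases : ∀ k : Fin 5, k = 0 ∨ k = 1 ∨ k = 2 ∨ k = 3 ∨ k = 4 := by decide
  have hsum : ∀ x : V, x = ∑ i : Fin 5, x i • e i := by
    intro x; ext k
    rcases kcases k with rfl|rfl|rfl|rfl|rfl <;>
      simp [e, EuclideanSpace.single_apply, Fin.sum_univ_five]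
  -- nab vanishes when an argument is 0
  have nz1 : ∀ y : V, nab 0 y = 0 := by
    intro y; ext k
    rw [hco]
    simp [inner_zero_right]
  have nz2 : ∀ x : V, nab x 0 = 0 := by
    intro x; ext k
    rw [hco]
    simp [inner_zero_left]
  -- specific covariant derivatives
  have n00 : nab (e 0) (e 0) = 0 := by
    ext k
    rw [hco]
    rcases kcases k with rfl|rfl|rfl|rfl|rfl <;>
      simp only [hb01, hb02, hb10, hb20, zb00, zb03, zb04, zb11, zb12, zb13, zb14, zb21, zb22, zb23, zb24, zb30, zb31, zb32, zb33, zb34, zb40, zb41, zb42, zb43, zb44, map_add, map_smul, LinearMap.add_apply, LinearMap.smul_apply] <;>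
      simp [e, PiLp.inner_apply, EuclideanSpace.single_apply, Fin.sum_univ_five]
  have n11 : nab (e 1) (e 1) = 0 := by
    ext k
    rw [hco]
    rcases kcases k with rfl|rfl|rfl|rfl|rfl <;>
      simp only [hb01, hb02, hb10, hb20, zb00, zb03, zb04, zb11, zb12, zb13, zb14, zb21, zb22, zb23, zb24, zb30, zb31, zb32, zb33, zb34, zb40, zb41, zb42, zb43, zb44, map_add, map_smul, LinearMap.add_apply, LinearMap.smul_apply] <;>
      simp [e, PiLp.inner_apply, EuclideanSpace.single_apply, Fin.sum_univ_five]
  have nR1 : ∀ c2 c4 : ℝ, nab (c2 • e 2 + c4 • e 4) (e 1) = ((c2*α + c4*γ)/2) • e 0 := by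
    intro c2 c4
    ext k
    rw [hco]
    rcases kcases k with rfl|rfl|rfl|rfl|rfl <;>
      simp only [hb01, hb02, hb10, hb20, zb00, zb03, zb04, zb11, zb12, zb13, zb14, zb21, zb22, zb23, zb24, zb30, zb31, zb32, zb33, zb34, zb40, zb41, zb42, zb43, zb44, map_add, map_smul, LinearMap.add_apply, LinearMap.smul_apply,
        inner_add_left, inner_add_right, real_inner_smul_left, real_inner_smul_right] <;>
      simp [e, PiLp.inner_apply, EuclideanSpace.single_apply, Fin.sum_univ_five] <;> ring
  have nL1 : ∀ c2 c4 : ℝ, nab (e 1) (c2 • e 2 + c4 • e 4) = ((c2*α + c4*γ)/2) • e 0 := by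
    intro c2 c4
    ext k
    rw [hco]
    rcases kcases k with rfl|rfl|rfl|rfl|rfl <;>
      simp only [hb01, hb02, hb10, hb20, zb00, zb03, zb04, zb11, zb12, zb13, zb14, zb21, zb22, zb23, zb24, zb30, zb31, zb32, zb33, zb34, zb40, zb41, zb42, zb43, zb44, map_add, map_smul, LinearMap.add_apply, LinearMap.smul_apply,
        inner_add_left, inner_add_right, real_inner_smul_left, real_inner_smul_right] <;>
      simp [e, PiLp.inner_apply, EuclideanSpace.single_apply, Fin.sum_univ_five] <;> ring
  have nR0 : ∀ c2 c4 : ℝ, nab (c2 • e 2 + c4 • e 4) (e 0) =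
      (-(c2*α + c4*γ)/2) • e 1 + (-(c4*β)/2) • e 2 + (-(c2*β)/2) • e 4 := by
    intro c2 c4
    ext k
    rw [hco]
    rcases kcases k with rfl|rfl|rfl|rfl|rfl <;>
      simp only [hb01, hb02, hb10, hb20, zb00, zb03, zb04, zb11, zb12, zb13, zb14, zb21, zb22, zb23, zb24, zb30, zb31, zb32, zb33, zb34, zb40, zb41, zb42, zb43, zb44, map_add, map_smul, LinearMap.add_apply, LinearMap.smul_apply,
        inner_add_left, inner_add_right, real_inner_smul_left, real_inner_smul_right] <;>
      simp [e, PiLp.inner_apply, EuclideanSpace.single_apply, Fin.sum_univ_five] <;> ring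
  have nL0 : ∀ c2 c4 : ℝ, nab (e 0) (c2 • e 2 + c4 • e 4) =
      (-(c2*α + c4*γ)/2) • e 1 + (-(c4*β)/2) • e 2 + ((c2*β)/2) • e 4 := by
    intro c2 c4
    ext k
    rw [hco]
    rcases kcases k with rfl|rfl|rfl|rfl|rfl <;>
      simp only [hb01, hb02, hb10, hb20, zb00, zb03, zb04, zb11, zb12, zb13, zb14, zb21, zb22, zb23, zb24, zb30, zb31, zb32, zb33, zb34, zb40, zb41, zb42, zb43, zb44, map_add, map_smul, LinearMap.add_apply, LinearMap.smul_apply,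
        inner_add_left, inner_add_right, real_inner_smul_left, real_inner_smul_right] <;>
      simp [e, PiLp.inner_apply, EuclideanSpace.single_apply, Fin.sum_univ_five] <;> ring
  constructor
  · intro H
    have hbξ1 : b ξ (e 1) = (ξ 0 * α) • e 2 + (ξ 0 * γ) • e 4 := by
      nth_rewrite 1 [hsum ξ]
      simp only [Fin.sum_univ_five, map_add, map_smul, LinearMap.add_apply, LinearMap.smul_apply,
        hb01, hb02, hb10, hb20, zb00, zb03, zb04, zb11, zb12, zb13, zb14, zb21, zb22, zb23, zb24, zb30, zb31, zb32, zb33, zb34, zb40, zb41, zb42, zb43, zb44]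
      ext k
      rcases kcases k with rfl|rfl|rfl|rfl|rfl <;>
        simp [e, EuclideanSpace.single_apply] <;> ring
    have hbξ0 : b ξ (e 0) = (-(ξ 1 * α)) • e 2 + (-(ξ 1 * γ) - ξ 2 * β) • e 4 := by
      nth_rewrite 1 [hsum ξ]
      simp only [Fin.sum_univ_five, map_add, map_smul, LinearMap.add_apply, LinearMap.smul_apply,
        hb01, hb02, hb10, hb20, zb00, zb03, zb04, zb11, zb12, zb13, zb14, zb21, zb22, zb23, zb24, zb30, zb31, zb32, zb33, zb34, zb40, zb41, zb42, zb43, zb44]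
      ext k
      rcases kcases k with rfl|rfl|rfl|rfl|rfl <;>
        simp [e, EuclideanSpace.single_apply] <;> ring
    have H1 := H (e 1) (e 1)
    rw [n11, hbξ1] at H1
    have H1' : b ξ 0 - nab ((ξ 0 * α) • e 2 + (ξ 0 * γ) • e 4) (e 1)
        - nab (e 1) ((ξ 0 * α) • e 2 + (ξ 0 * γ) • e 4) = 0 := H1
    rw [map_zero, nR1, nL1] at H1'
    have hc0 := congrArg (fun v : V => v 0) H1'
    simp only [e, PiLp.sub_apply, PiLp.smul_apply, PiLp.zero_apply,
      EuclideanSpace.single_apply, smul_eq_mul] at hc0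
    norm_num at hc0
    have hξ0 : ξ 0 = 0 := by
      have hpos : (0:ℝ) < α*α + γ*γ := add_pos_of_pos_of_nonneg (mul_pos hα hα) (mul_self_nonneg γ)
      have hz : ξ 0 * (α*α + γ*γ) = 0 := by linarith
      exact (mul_eq_zero.mp hz).resolve_right hpos.ne'
    have H0 := H (e 0) (e 0)
    rw [n00, hbξ0] at H0
    have H0' : b ξ 0 - nab ((-(ξ 1 * α)) • e 2 + (-(ξ 1 * γ) - ξ 2 * β) • e 4) (e 0)
        - nab (e 0) ((-(ξ 1 * α)) • e 2 + (-(ξ 1 * γ) - ξ 2 * β) • e 4) = 0 := H0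
    rw [map_zero, nR0, nL0] at H0'
    have hc2 := congrArg (fun v : V => v 2) H0'
    have hc1 := congrArg (fun v : V => v 1) H0'
    simp [e, EuclideanSpace.single_apply] at hc2 hc1
    have h2' : (-(ξ 1 * γ) - ξ 2 * β) * β = 0 := by linarith
    have h4 : -(ξ 1 * γ) - ξ 2 * β = 0 :=
      (mul_eq_zero.mp h2').resolve_right hβ.ne'
    have h4g : (-(ξ 1 * γ) - ξ 2 * β) * γ = 0 := by rw [h4, zero_mul]
    have h1' : ξ 1 * (α*α) = 0 := by nlinarith [hc1, h4g]
    have hξ1 : ξ 1 = 0 :=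
      (mul_eq_zero.mp h1').resolve_right (mul_pos hα hα).ne'
    have hξ2 : ξ 2 = 0 := by
      rw [hξ1] at h4
      have : ξ 2 * β = 0 := by linarith
      exact (mul_eq_zero.mp this).resolve_right hβ.ne'
    exact ⟨hξ0, hξ1, hξ2⟩
  · rintro ⟨h0, h1, h2⟩
    have hb3 : ∀ y : V, b (e 3) y = 0 := by
      intro y
      nth_rewrite 1 [hsum y]
      simp [Fin.sum_univ_five, hb01, hb02, hb10, hb20, zb00, zb03, zb04, zb11, zb12, zb13, zb14, zb21, zb22, zb23, zb24, zb30, zb31, zb32, zb33, zb34, zb40, zb41, zb42, zb43, zb44]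
    have hb4 : ∀ y : V, b (e 4) y = 0 := by
      intro y
      nth_rewrite 1 [hsum y]
      simp [Fin.sum_univ_five, hb01, hb02, hb10, hb20, zb00, zb03, zb04, zb11, zb12, zb13, zb14, zb21, zb22, zb23, zb24, zb30, zb31, zb32, zb33, zb34, zb40, zb41, zb42, zb43, zb44]
    have hcent : ∀ y : V, b ξ y = 0 := by
      intro y
      nth_rewrite 1 [hsum ξ]
      simp only [Fin.sum_univ_five]
      rw [h0, h1, h2]
      simp only [zero_smul, zero_add, map_add, map_smul,
        LinearMap.add_apply, LinearMap.smul_apply, LinearMap.zero_apply]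
      rw [hb3 y, hb4 y]
      simp
    intro v w
    rw [hcent (nab v w), hcent v, hcent w, nz1 w, nz2 v]
    simp
end

section
/- Let g = A_{5,1} be the 5-dimensional metric Lie algebra with orthonormal basis v1,…,v5 and nonzero brackets [v1,v2] = α v4 + β v5, [v1,v3] = γ v5, with α, γ > 0 and β ∈ ℝ. Then ξ = Σ ξ_i v_i is affine if and only if ξ1 = ξ2 = ξ3 = 0, i.e. ξ ∈ Z(g) = span{v4, v5}. In particular, the homogeneous 2×2 system (α²+β²)ξ2 + βγ ξ3 = 0, βγ ξ2 + γ² ξ3 = 0 has determinant α²γ² > 0 and hence only the trivial solution. -/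
local notation "⟪" x ", " y "⟫" => @inner ℝ _ _ x y

/-- on `A_{5,1}` (brackets `[v1,v2]=αv4+βv5`, `[v1,v3]=γv5`, `α,γ>0`),
`ξ` is affine iff `ξ1=ξ2=ξ3=0`, i.e. `ξ ∈ Z(g) = span{v4,v5}`; in particular the
homogeneous `2×2` system has determinant `α²γ² > 0` and only the trivial solution. -/
theorem stmt_13
    (α β γ : ℝ) (hα : 0 < α) (hγ : 0 < γ)
    (b : V →ₗ[ℝ] V →ₗ[ℝ] V)
    (hskew : ∀ x y, b x y = - b y x)
    (h12 : b (e 0) (e 1) = α • e 3 + β • e 4)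
    (h13 : b (e 0) (e 2) = γ • e 4)
    (hzero : ∀ i j : Fin 5, i < j →
      (i, j) ∉ ({(0, 1), (0, 2)} : Set (Fin 5 × Fin 5)) → b (e i) (e j) = 0)
    (nab : V → V → V)
    (hkoszul : ∀ x y z, 2 * ⟪nab x y, z⟫ = ⟪b x y, z⟫ - ⟪b y z, x⟫ + ⟪b z x, y⟫)
    (ξ : V) :
    ((∀ v w, b ξ (nab v w) - nab (b ξ v) w - nab v (b ξ w) = 0) ↔
      (ξ 0 = 0 ∧ ξ 1 = 0 ∧ ξ 2 = 0)) ∧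
    ((α^2 + β^2) * γ^2 - (β*γ) * (β*γ) = α^2 * γ^2 ∧ 0 < α^2 * γ^2) ∧
    (∀ x2 x3 : ℝ, (α^2 + β^2) * x2 + β*γ*x3 = 0 → β*γ*x2 + γ^2*x3 = 0 →
      x2 = 0 ∧ x3 = 0) := by
  -- diagonal vanishing
  have hbself : ∀ u : V, b u u = 0 := by
    intro u
    have h := hskew u u
    have h2 : b u u + b u u = 0 := by nth_rewrite 1 [h]; simp
    have h3 : (2:ℝ) • b u u = 0 := by rw [two_smul]; exact h2
    simpa using (smul_eq_zero.mp h3).resolve_left (by norm_num)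
  -- zero bracket lemmas
  have z03 : b (e 0) (e 3) = 0 := hzero 0 3 (by decide) (by simp)
  have z04 : b (e 0) (e 4) = 0 := hzero 0 4 (by decide) (by simp)
  have z12 : b (e 1) (e 2) = 0 := hzero 1 2 (by decide) (by simp)
  have z13 : b (e 1) (e 3) = 0 := hzero 1 3 (by decide) (by simp)
  have z14 : b (e 1) (e 4) = 0 := hzero 1 4 (by decide) (by simp)
  have z23 : b (e 2) (e 3) = 0 := hzero 2 3 (by decide) (by simp)
  have z24 : b (e 2) (e 4) = 0 := hzero 2 4 (by decide) (by simp)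
  have z34 : b (e 3) (e 4) = 0 := hzero 3 4 (by decide) (by simp)
  have s10 : b (e 1) (e 0) = -(α • e 3 + β • e 4) := by rw [hskew, h12]
  have s20 : b (e 2) (e 0) = -(γ • e 4) := by rw [hskew, h13]
  have s30 : b (e 3) (e 0) = 0 := by rw [hskew, z03, neg_zero]
  have s40 : b (e 4) (e 0) = 0 := by rw [hskew, z04, neg_zero]
  have s21 : b (e 2) (e 1) = 0 := by rw [hskew, z12, neg_zero]
  have s31 : b (e 3) (e 1) = 0 := by rw [hskew, z13, neg_zero]
  have s41 : b (e 4) (e 1) = 0 := by rw [hskew, z14, neg_zero]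
  have s32 : b (e 3) (e 2) = 0 := by rw [hskew, z23, neg_zero]
  have s42 : b (e 4) (e 2) = 0 := by rw [hskew, z24, neg_zero]
  have s43 : b (e 4) (e 3) = 0 := by rw [hskew, z34, neg_zero]
  -- basis expansion
  have hx : ∀ x : V, x = x 0 • e 0 + x 1 • e 1 + x 2 • e 2 + x 3 • e 3 + x 4 • e 4 := by
    intro x
    ext k
    fin_cases k <;>
      simp [e, EuclideanSpace.single_apply]
  -- explicit bracket
  have hb : ∀ x y : V, b x y = (x 0 * y 1 - x 1 * y 0) • (α • e 3 + β • e 4)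
      + (x 0 * y 2 - x 2 * y 0) • (γ • e 4) := by
    intro x y
    conv_lhs => rw [hx x, hx y]
    simp only [map_add, map_smul, LinearMap.add_apply, LinearMap.smul_apply,
      h12, h13, s10, s20, s30, s40, s21, s31, s41, s32, s42, s43,
      z03, z04, z12, z13, z14, z23, z24, z34, hbself,
      smul_zero, add_zero, zero_add]
    module
  -- coordinates of nab
  have hnk : ∀ (x y : V) (k : Fin 5), nab x y k =
      ((x 0 * y 1 - x 1 * y 0) * (α * e k 3 + β * e k 4)
        + (x 0 * y 2 - x 2 * y 0) * (γ * e k 4)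
        - (α * (y 0 * e k 1 - y 1 * e k 0) * x 3
            + (β * (y 0 * e k 1 - y 1 * e k 0) + γ * (y 0 * e k 2 - y 2 * e k 0)) * x 4)
        + (α * (e k 0 * x 1 - e k 1 * x 0) * y 3
            + (β * (e k 0 * x 1 - e k 1 * x 0) + γ * (e k 0 * x 2 - e k 2 * x 0)) * y 4)) / 2 := by
    intro x y k
    have h := hkoszul x y (e k)
    rw [hb x y, hb y (e k), hb (e k) x] at h
    fin_cases k <;>
      (simp (config := { decide := true }) only [e, inner_add_left, real_inner_smul_left,
        EuclideanSpace.inner_single_left, EuclideanSpace.inner_single_right,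
        EuclideanSpace.single_apply, conj_trivial, one_mul, mul_one,
        PiLp.add_apply, PiLp.smul_apply, smul_eq_mul, mul_zero, zero_mul,
        add_zero, zero_add, sub_zero, zero_sub, mul_ite, ite_mul,
        Fin.isValue, Fin.reduceEq, reduceIte] at h ⊢ <;>
       linear_combination h / 2)
  -- coordinates of b
  have hbk : ∀ (x y : V) (k : Fin 5), (b x y) k =
      (x 0 * y 1 - x 1 * y 0) * (α * e k 3 + β * e k 4)
        + (x 0 * y 2 - x 2 * y 0) * (γ * e k 4) := by
    intro x y k
    rw [hb]
    fin_cases k <;>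
      simp (config := { decide := true }) [e, EuclideanSpace.single_apply, PiLp.add_apply, PiLp.smul_apply] <;> ring
  refine ⟨?_, ⟨by ring, by positivity⟩, ?_⟩
  · constructor
    · intro hAff
      have coord : ∀ (v w : V) (k : Fin 5),
          b ξ (nab v w) k - nab (b ξ v) w k - nab v (b ξ w) k = 0 := by
        intro v w k
        have h := hAff v w
        calc b ξ (nab v w) k - nab (b ξ v) w k - nab v (b ξ w) k
            = (b ξ (nab v w) - nab (b ξ v) w - nab v (b ξ w)) k := by
              simp [PiLp.sub_apply]
          _ = 0 := by rw [h]; rfl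
      -- ξ 0 = 0 from the (e 0, e 2) equation, coordinate 2
      have H02 := coord (e 0) (e 2) 2
      simp only [hbk, hnk, e, EuclideanSpace.single_apply,
        Fin.isValue, Fin.reduceEq, reduceIte] at H02
      have h0 : ξ 0 = 0 := by
        have h : γ * γ * ξ 0 = 0 := by linear_combination 2 * H02
        have hc : γ * γ ≠ 0 := by positivity
        exact (mul_eq_zero.mp h).resolve_left hc
      -- ξ 1 = 0 from the (e 1, e 3) equation, coordinate 3
      have H13 := coord (e 1) (e 3) 3
      simp only [hbk, hnk, e, EuclideanSpace.single_apply,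
        Fin.isValue, Fin.reduceEq, reduceIte] at H13
      have h1 : ξ 1 = 0 := by
        have h : α * α * ξ 1 = 0 := by linear_combination -2 * H13
        have hc : α * α ≠ 0 := by positivity
        exact (mul_eq_zero.mp h).resolve_left hc
      -- ξ 2 = 0 from the (e 1, e 3) equation, coordinate 4
      have H14 := coord (e 1) (e 3) 4
      simp only [hbk, hnk, e, EuclideanSpace.single_apply,
        Fin.isValue, Fin.reduceEq, reduceIte] at H14
      have h2 : ξ 2 = 0 := by
        have h : α * γ * ξ 2 = 0 := by linear_combination -2 * H14 - α * β * h1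
        have hc : α * γ ≠ 0 := by positivity
        exact (mul_eq_zero.mp h).resolve_left hc
      exact ⟨h0, h1, h2⟩
    · rintro ⟨h0, h1, h2⟩ v w
      have hbz : ∀ u : V, b ξ u = 0 := by
        intro u; rw [hb, h0, h1, h2]; simp
      have hnzl : ∀ u : V, nab 0 u = 0 := by
        intro u; ext k; rw [hnk]; simp
      have hnzr : ∀ u : V, nab u 0 = 0 := by
        intro u; ext k; rw [hnk]; simp
      rw [hbz v, hbz w, hbz, hnzl, hnzr]
      simp
  · intro x2 x3 hA hB
    have hx2 : x2 = 0 := by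
      have h : α^2 * γ * x2 = 0 := by linear_combination γ * hA - β * hB
      have hc : α^2 * γ ≠ 0 := by positivity
      exact (mul_eq_zero.mp h).resolve_left hc
    refine ⟨hx2, ?_⟩
    rw [hx2] at hB
    have h : γ^2 * x3 = 0 := by linear_combination hB
    exact (mul_eq_zero.mp h).resolve_left (by positivity)
end

section
/- Let g = A_{5,5} be the 5-dimensional metric Lie algebra with orthonormal basis v1,…,v5 and nonzero brackets [v1,v2] = α v4 + β v5, [v1,v3] = γ v5, [v2,v3] = δ v5, [v2,v4] = ε v5, with α, γ, ε > 0 and β, δ ∈ ℝ. Then ξ = Σ ξ_i v_i is affine if and only if ξ1 = ξ2 = ξ3 = ξ4 = 0, i.e. ξ ∈ Z(g) = span{v5}. -/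
local notation "⟪" x ", " y "⟫" => @inner ℝ _ _ x y

set_option maxHeartbeats 2000000 in
/-- on `A_{5,5}` (brackets `[v1,v2]=αv4+βv5`, `[v1,v3]=γv5`,
`[v2,v3]=δv5`, `[v2,v4]=εv5`, `α,γ,ε>0`), `ξ` is affine iff `ξ1=ξ2=ξ3=ξ4=0`,
i.e. `ξ ∈ Z(g) = span{v5}`. -/
theorem stmt_15
    (α β γ δ ε : ℝ) (hα : 0 < α) (hγ : 0 < γ) (hε : 0 < ε)
    (b : V →ₗ[ℝ] V →ₗ[ℝ] V)
    (hskew : ∀ x y, b x y = - b y x)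
    (h12 : b (e 0) (e 1) = α • e 3 + β • e 4)
    (h13 : b (e 0) (e 2) = γ • e 4)
    (h23 : b (e 1) (e 2) = δ • e 4)
    (h24 : b (e 1) (e 3) = ε • e 4)
    (hzero : ∀ i j : Fin 5, i < j →
      (i, j) ∉ ({(0, 1), (0, 2), (1, 2), (1, 3)} : Set (Fin 5 × Fin 5)) → b (e i) (e j) = 0)
    (nab : V → V → V)
    (hkoszul : ∀ x y z, 2 * ⟪nab x y, z⟫ = ⟪b x y, z⟫ - ⟪b y z, x⟫ + ⟪b z x, y⟫)
    (ξ : V) :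
    (∀ v w, b ξ (nab v w) - nab (b ξ v) w - nab v (b ξ w) = 0) ↔
      (ξ 0 = 0 ∧ ξ 1 = 0 ∧ ξ 2 = 0 ∧ ξ 3 = 0) := by
  have hek : ∀ i k : Fin 5, e i k = if k = i then 1 else 0 := by
    intro i k; simp [e]
  have hinner : ∀ (x : V) (k : Fin 5), ⟪e k, x⟫ = x k := by
    intro x k
    rw [show e k = EuclideanSpace.single k (1:ℝ) from rfl,
      EuclideanSpace.inner_single_left]
    simp
  have hx : ∀ x : V, x = x 0 • e 0 + x 1 • e 1 + x 2 • e 2 + x 3 • e 3 + x 4 • e 4 := by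
    intro x
    ext k
    fin_cases k <;> simp [hek, PiLp.add_apply, PiLp.smul_apply]
  have hdiag : ∀ x, b x x = 0 := by
    intro x
    have h := hskew x x
    have h2 : (2:ℝ) • b x x = 0 := by
      rw [two_smul]; nth_rewrite 2 [h]; simp
    rcases smul_eq_zero.mp h2 with h' | h'
    · norm_num at h'
    · exact h'
  -- zero brackets
  have h03 : b (e 0) (e 3) = 0 := hzero 0 3 (by decide) (by simp [Prod.ext_iff])
  have h04 : b (e 0) (e 4) = 0 := hzero 0 4 (by decide) (by simp [Prod.ext_iff])
  have h14 : b (e 1) (e 4) = 0 := hzero 1 4 (by decide) (by simp [Prod.ext_iff])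
  have h2_3 : b (e 2) (e 3) = 0 := hzero 2 3 (by decide) (by simp [Prod.ext_iff])
  have h2_4 : b (e 2) (e 4) = 0 := hzero 2 4 (by decide) (by simp [Prod.ext_iff])
  have h34 : b (e 3) (e 4) = 0 := hzero 3 4 (by decide) (by simp [Prod.ext_iff])
  -- the full bracket in coordinates
  have hA : ∀ x y : V, b x y = (α*(x 0*y 1 - x 1*y 0)) • e 3 +
      (β*(x 0*y 1 - x 1*y 0) + γ*(x 0*y 2 - x 2*y 0) + δ*(x 1*y 2 - x 2*y 1)
        + ε*(x 1*y 3 - x 3*y 1)) • e 4 := by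
    intro x y
    conv_lhs => rw [hx x, hx y]
    simp only [map_add, map_smul, LinearMap.add_apply, LinearMap.smul_apply]
    rw [hskew (e 1) (e 0), hskew (e 2) (e 0), hskew (e 2) (e 1), hskew (e 3) (e 0),
      hskew (e 3) (e 1), hskew (e 3) (e 2), hskew (e 4) (e 0), hskew (e 4) (e 1),
      hskew (e 4) (e 2), hskew (e 4) (e 3)]
    rw [h12, h13, h23, h24, h03, h04, h14, h2_3, h2_4, h34,
      hdiag (e 0), hdiag (e 1), hdiag (e 2), hdiag (e 3), hdiag (e 4)]
    module
  have hIA : ∀ x y z : V, ⟪b x y, z⟫ = (α*(x 0*y 1 - x 1*y 0)) * z 3 +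
      (β*(x 0*y 1 - x 1*y 0) + γ*(x 0*y 2 - x 2*y 0) + δ*(x 1*y 2 - x 2*y 1)
        + ε*(x 1*y 3 - x 3*y 1)) * z 4 := by
    intro x y z
    rw [hA]
    simp only [inner_add_left, real_inner_smul_left, hinner]
  have hbk : ∀ (x y : V) (k : Fin 5), b x y k = (α*(x 0*y 1 - x 1*y 0)) * e 3 k +
      (β*(x 0*y 1 - x 1*y 0) + γ*(x 0*y 2 - x 2*y 0) + δ*(x 1*y 2 - x 2*y 1)
        + ε*(x 1*y 3 - x 3*y 1)) * e 4 k := by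
    intro x y k
    rw [hA]
    simp [PiLp.add_apply, PiLp.smul_apply, smul_eq_mul]
  have hN : ∀ (x y : V) (k : Fin 5), nab x y k =
      ((α*(x 0*y 1 - x 1*y 0)) * e k 3 +
        (β*(x 0*y 1 - x 1*y 0) + γ*(x 0*y 2 - x 2*y 0) + δ*(x 1*y 2 - x 2*y 1)
          + ε*(x 1*y 3 - x 3*y 1)) * e k 4
      - ((α*(y 0*e k 1 - y 1*e k 0)) * x 3 +
        (β*(y 0*e k 1 - y 1*e k 0) + γ*(y 0*e k 2 - y 2*e k 0) + δ*(y 1*e k 2 - y 2*e k 1)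
          + ε*(y 1*e k 3 - y 3*e k 1)) * x 4)
      + ((α*(e k 0*x 1 - e k 1*x 0)) * y 3 +
        (β*(e k 0*x 1 - e k 1*x 0) + γ*(e k 0*x 2 - e k 2*x 0) + δ*(e k 1*x 2 - e k 2*x 1)
          + ε*(e k 1*x 3 - e k 3*x 1)) * y 4)) / 2 := by
    intro x y k
    have h := hkoszul x y (e k)
    rw [hIA, hIA, hIA] at h
    rw [real_inner_comm, hinner] at h
    linarith
  constructor
  · intro h
    have hcomp : ∀ (v w : V) (k : Fin 5),
        b ξ (nab v w) k - nab (b ξ v) w k - nab v (b ξ w) k = 0 := by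
      intro v w k
      have h' := congrArg (fun z : V => z k) (h v w)
      simpa [PiLp.sub_apply] using h'
    have E1 := hcomp (e 3) (e 3) 1
    simp only [hbk, hN, hek] at E1
    simp only [Fin.reduceEq, reduceIte, Fin.isValue] at E1
    ring_nf at E1
    have E2 := hcomp (e 3) (e 4) 3
    simp only [hbk, hN, hek] at E2
    simp only [Fin.reduceEq, reduceIte, Fin.isValue] at E2
    ring_nf at E2
    have E3 := hcomp (e 0) (e 1) 3
    simp only [hbk, hN, hek] at E3
    simp only [Fin.reduceEq, reduceIte, Fin.isValue] at E3
    ring_nf at E3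
    have E4 := hcomp (e 0) (e 3) 4
    simp only [hbk, hN, hek] at E4
    simp only [Fin.reduceEq, reduceIte, Fin.isValue] at E4
    ring_nf at E4
    have hx1 : ξ 1 = 0 := by
      have h' : ε ^ 2 * ξ 1 = 0 := by linarith
      exact (mul_eq_zero.mp h').resolve_left (pow_ne_zero 2 hε.ne')
    have hx0 : ξ 0 = 0 := by
      have h' : (α * ε) * ξ 0 = 0 := by linear_combination 2 * E2
      exact (mul_eq_zero.mp h').resolve_left (mul_pos hα hε).ne'
    have hx2 : ξ 2 = 0 := by
      have h' : (γ * ε) * ξ 2 = 0 := by linear_combination (-2) * E3 + (-(β * ε)) * hx1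
      exact (mul_eq_zero.mp h').resolve_left (mul_pos hγ hε).ne'
    have hx3 : ξ 3 = 0 := by
      have h' : (α * ε) * ξ 3 = 0 := by linear_combination 2 * E4 + (α * β) * hx0 + (-(α * δ)) * hx2
      exact (mul_eq_zero.mp h').resolve_left (mul_pos hα hε).ne'
    exact ⟨hx0, hx1, hx2, hx3⟩
  · rintro ⟨h0, h1, h2, h3⟩ v w
    have hbz : ∀ x : V, b ξ x = 0 := by
      intro x
      rw [hA]
      simp [h0, h1, h2, h3]
    have hnz : ∀ y : V, nab (0:V) y = 0 := by
      intro y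
      ext k
      rw [hN]
      simp
    have hnz' : ∀ y : V, nab y (0:V) = 0 := by
      intro y
      ext k
      rw [hN]
      simp
    simp [hbz, hnz, hnz']
end

section
/- Let g = A_{5,1} be the 5-dimensional metric Lie algebra with orthonormal basis v1,…,v5 and nonzero brackets [v1,v2] = α v4 + β v5, [v1,v3] = γ v5, α, γ > 0, β ∈ ℝ. If ξ ∈ g and ω ∈ g* satisfy (L_ξ∇)(v,w) = ω(v)w + ω(w)v for all v,w ∈ g (i.e. ξ is a left-invariant projective vector field with associated form ω), then ω = 0 and (L_ξ∇) = 0; hence every left-invariant projective vector field on this algebra is affine. -/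
local notation "⟪" x ", " y "⟫" => @inner ℝ _ _ x y

noncomputable def stdB : Module.Basis (Fin 5) ℝ V := (EuclideanSpace.basisFun (Fin 5) ℝ).toBasis

lemma stdB_eq (i : Fin 5) : stdB i = e i := by
  simp [stdB, e, EuclideanSpace.basisFun_apply]

lemma expand_e (z : V) : z = ∑ k : Fin 5, z k • e k := by
  conv_lhs => rw [← stdB.sum_repr z]
  refine Finset.sum_congr rfl fun k _ => ?_
  rw [stdB_eq]; rfl

lemma inner_ee (i j : Fin 5) : ⟪e i, e j⟫ = if i = j then (1:ℝ) else 0 := by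
  simp [e, EuclideanSpace.inner_single_left, EuclideanSpace.single_apply, eq_comm]

lemma inner_ext_e (v : V) (h : ∀ k, ⟪v, e k⟫ = 0) : v = 0 := by
  ext k
  have := h k
  simpa [e, EuclideanSpace.inner_single_right] using this

/-- on `A_{5,1}` (brackets `[v1,v2]=αv4+βv5`, `[v1,v3]=γv5`, `α,γ>0`),
every left-invariant projective vector field has vanishing associated 1-form and is
affine. -/
theorem stmt_16
    (α β γ : ℝ) (hα : 0 < α) (hγ : 0 < γ)
    (b : V →ₗ[ℝ] V →ₗ[ℝ] V)
    (hskew : ∀ x y, b x y = - b y x)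
    (h12 : b (e 0) (e 1) = α • e 3 + β • e 4)
    (h13 : b (e 0) (e 2) = γ • e 4)
    (hzero : ∀ i j : Fin 5, i < j →
      (i, j) ∉ ({(0, 1), (0, 2)} : Set (Fin 5 × Fin 5)) → b (e i) (e j) = 0)
    (nab : V → V → V)
    (hkoszul : ∀ x y z, 2 * ⟪nab x y, z⟫ = ⟪b x y, z⟫ - ⟪b y z, x⟫ + ⟪b z x, y⟫)
    (ξ : V) (ω : V →ₗ[ℝ] ℝ)
    (hproj : ∀ v w, b ξ (nab v w) - nab (b ξ v) w - nab v (b ξ w) = ω v • w + ω w • v) :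
    ω = 0 ∧ ∀ v w, b ξ (nab v w) - nab (b ξ v) w - nab v (b ξ w) = 0 := by
  -- diagonal of b vanishes
  have hdiag : ∀ x : V, b x x = 0 := by
    intro x
    have h := hskew x x
    rw [eq_neg_iff_add_eq_zero] at h
    have h2 : (2 : ℝ) • b x x = 0 := by rw [two_smul]; exact h
    simpa using h2
  -- zero table entries
  have hb03 : b (e 0) (e 3) = 0 := hzero 0 3 (by decide) (by simp)
  have hb04 : b (e 0) (e 4) = 0 := hzero 0 4 (by decide) (by simp)
  have hb12 : b (e 1) (e 2) = 0 := hzero 1 2 (by decide) (by simp)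
  have hb13 : b (e 1) (e 3) = 0 := hzero 1 3 (by decide) (by simp)
  have hb14 : b (e 1) (e 4) = 0 := hzero 1 4 (by decide) (by simp)
  have hb23 : b (e 2) (e 3) = 0 := hzero 2 3 (by decide) (by simp)
  have hb24 : b (e 2) (e 4) = 0 := hzero 2 4 (by decide) (by simp)
  have hb34 : b (e 3) (e 4) = 0 := hzero 3 4 (by decide) (by simp)
  -- b (e 3) and b (e 4) vanish identically
  have hb3k : ∀ k : Fin 5, b (e 3) (e k) = 0 := by
    intro k
    fin_cases k
    · exact (by rw [hskew, hb03]; simp : b (e 3) (e 0) = 0)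
    · exact (by rw [hskew, hb13]; simp : b (e 3) (e 1) = 0)
    · exact (by rw [hskew, hb23]; simp : b (e 3) (e 2) = 0)
    · exact hdiag (e 3)
    · exact hb34
  have hb4k : ∀ k : Fin 5, b (e 4) (e k) = 0 := by
    intro k
    fin_cases k
    · exact (by rw [hskew, hb04]; simp : b (e 4) (e 0) = 0)
    · exact (by rw [hskew, hb14]; simp : b (e 4) (e 1) = 0)
    · exact (by rw [hskew, hb24]; simp : b (e 4) (e 2) = 0)
    · exact (by rw [hskew, hb34]; simp : b (e 4) (e 3) = 0)
    · exact hdiag (e 4)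
  have hb3map : b (e 3) = 0 := stdB.ext fun i => by simp [stdB_eq, hb3k]
  have hb4map : b (e 4) = 0 := stdB.ext fun i => by simp [stdB_eq, hb4k]
  -- the key inner-product vanishing: ⟪b (e i) z, e i⟫ = 0
  have key : ∀ i : Fin 5, ∀ z : V, ⟪b (e i) z, e i⟫ = 0 := by
    intro i z
    conv_lhs => rw [expand_e z]
    rw [map_sum, sum_inner, Fin.sum_univ_five]
    fin_cases i <;>
      simp [map_smul, real_inner_smul_left, hdiag, h12, h13, hb03, hb04, hb12, hb13,
        hb14, hb23, hb24, hb34, hb3map, hb4map, hskew (e 1) (e 0), hskew (e 2) (e 0),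
        hskew (e 2) (e 1), inner_add_left, inner_neg_left, inner_ee]
    all_goals simp [Fin.sum_univ_five, e, EuclideanSpace.single_apply]
  -- nab (e i) (e i) = 0
  have nself : ∀ i : Fin 5, nab (e i) (e i) = 0 := by
    intro i
    apply inner_ext_e
    intro k
    have h := hkoszul (e i) (e i) (e k)
    rw [hdiag] at h
    have h2 : ⟪b (e k) (e i), e i⟫ = -⟪b (e i) (e k), e i⟫ := by
      rw [hskew (e k) (e i)]; simp [inner_neg_left]
    have hk := key i (e k)
    simp only [inner_zero_left] at h
    linarith [h, h2, hk]
  -- two general Koszul consequences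
  have lemA : ∀ u w : V, ⟪nab u w, w⟫ = 0 := by
    intro u w
    have h := hkoszul u w w
    rw [hdiag w, hskew w u] at h
    simp only [inner_neg_left, inner_zero_left] at h
    linarith
  have lemB : ∀ u w : V, ⟪nab w u, w⟫ = ⟪b w u, w⟫ := by
    intro u w
    have h := hkoszul w u w
    rw [hdiag w, hskew u w] at h
    simp only [inner_neg_left, inner_zero_left] at h
    linarith
  -- ω vanishes on the basis
  have main : ∀ i : Fin 5, ω (e i) = 0 := by
    intro i
    have hpe := hproj (e i) (e i)
    rw [nself i, map_zero, zero_sub] at hpe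
    have h2 := congrArg (fun v : V => ⟪v, e i⟫) hpe
    simp only [inner_sub_left, inner_neg_left, inner_add_left, real_inner_smul_left] at h2
    rw [lemA, lemB, key i, inner_ee] at h2
    simp at h2
    linarith
  have hω : ω = 0 := by
    apply stdB.ext
    intro i
    rw [stdB_eq, main i]
    rfl
  refine ⟨hω, fun v w => ?_⟩
  rw [hproj v w, hω]
  simp
end

section
/- Let g = A_{3,1} ⊕ 2A_1 be the 5-dimensional metric Lie algebra with orthonormal basis v1,…,v5 and only nonzero bracket [v1,v2] = α v5, α > 0. If ξ ∈ g and ω ∈ g* satisfy (L_ξ∇)(v,w) = ω(v)w + ω(w)v for all v,w ∈ g, then ω = 0, ξ1 = ξ2 = 0, and ξ ∈ Z(g); thus every left-invariant projective vector field is affine. -/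
local notation "⟪" x ", " y "⟫" => @inner ℝ _ _ x y

set_option maxHeartbeats 1600000 in
/-- on `A_{3,1} ⊕ 2A_1`, every left-invariant projective vector field has
vanishing associated 1-form, lies in the center, and hence is affine. -/
theorem stmt_17
    (α : ℝ) (hα : 0 < α)
    (b : V →ₗ[ℝ] V →ₗ[ℝ] V)
    (hskew : ∀ x y, b x y = - b y x)
    (h12 : b (e 0) (e 1) = α • e 4)
    (hzero : ∀ i j : Fin 5, i < j → (i, j) ≠ ((0 : Fin 5), (1 : Fin 5)) → b (e i) (e j) = 0)
    (nab : V → V → V)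
    (hkoszul : ∀ x y z, 2 * ⟪nab x y, z⟫ = ⟪b x y, z⟫ - ⟪b y z, x⟫ + ⟪b z x, y⟫)
    (ξ : V) (ω : V →ₗ[ℝ] ℝ)
    (hproj : ∀ v w, b ξ (nab v w) - nab (b ξ v) w - nab v (b ξ w) = ω v • w + ω w • v) :
    ω = 0 ∧ ξ 0 = 0 ∧ ξ 1 = 0 ∧ ξ ∈ Submodule.span ℝ ({e 2, e 3, e 4} : Set V) := by
  -- coordinate expansion of vectors
  have hexp : ∀ u : V, u = ∑ i, u i • e i := by
    intro u; ext j
    simp [e, EuclideanSpace.single_apply, Fin.sum_univ_five]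
    fin_cases j <;> simp
  -- the bracket table
  have hdiag : ∀ i, b (e i) (e i) = 0 := by
    intro i
    have h := hskew (e i) (e i)
    have h2 : (2:ℝ) • b (e i) (e i) = 0 := by
      rw [two_smul]; nth_rewrite 2 [h]; abel
    simpa using h2
  have h10 : b (e 1) (e 0) = -(α • e 4) := by rw [hskew, h12]
  have hz02 : b (e 0) (e 2) = 0 := hzero 0 2 (by decide) (by decide)
  have hz03 : b (e 0) (e 3) = 0 := hzero 0 3 (by decide) (by decide)
  have hz04 : b (e 0) (e 4) = 0 := hzero 0 4 (by decide) (by decide)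
  have hz12 : b (e 1) (e 2) = 0 := hzero 1 2 (by decide) (by decide)
  have hz13 : b (e 1) (e 3) = 0 := hzero 1 3 (by decide) (by decide)
  have hz14 : b (e 1) (e 4) = 0 := hzero 1 4 (by decide) (by decide)
  have hz20 : b (e 2) (e 0) = 0 := by rw [hskew, hzero 0 2 (by decide) (by decide)]; simp
  have hz21 : b (e 2) (e 1) = 0 := by rw [hskew, hzero 1 2 (by decide) (by decide)]; simp
  have hz23 : b (e 2) (e 3) = 0 := hzero 2 3 (by decide) (by decide)
  have hz24 : b (e 2) (e 4) = 0 := hzero 2 4 (by decide) (by decide)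
  have hz30 : b (e 3) (e 0) = 0 := by rw [hskew, hzero 0 3 (by decide) (by decide)]; simp
  have hz31 : b (e 3) (e 1) = 0 := by rw [hskew, hzero 1 3 (by decide) (by decide)]; simp
  have hz32 : b (e 3) (e 2) = 0 := by rw [hskew, hzero 2 3 (by decide) (by decide)]; simp
  have hz34 : b (e 3) (e 4) = 0 := hzero 3 4 (by decide) (by decide)
  have hz40 : b (e 4) (e 0) = 0 := by rw [hskew, hzero 0 4 (by decide) (by decide)]; simp
  have hz41 : b (e 4) (e 1) = 0 := by rw [hskew, hzero 1 4 (by decide) (by decide)]; simp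
  have hz42 : b (e 4) (e 2) = 0 := by rw [hskew, hzero 2 4 (by decide) (by decide)]; simp
  have hz43 : b (e 4) (e 3) = 0 := by rw [hskew, hzero 3 4 (by decide) (by decide)]; simp
  -- master formula for the bracket
  have hb : ∀ x y : V, b x y = (α * (x 0 * y 1 - x 1 * y 0)) • e 4 := by
    intro x y
    calc b x y = b (∑ i, x i • e i) (∑ j, y j • e j) := by rw [← hexp, ← hexp]
      _ = _ := by
          simp only [map_sum, LinearMap.sum_apply, map_smul, LinearMap.smul_apply,
            Fin.sum_univ_five, map_add, LinearMap.add_apply, h12, h10, hdiag, hz02, hz03, hz04, hz12, hz13, hz14, hz20, hz21, hz23, hz24, hz30, hz31, hz32, hz34, hz40, hz41, hz42, hz43,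
            smul_zero, add_zero, zero_add]
          simp only [smul_smul, smul_neg, ← neg_smul, ← add_smul]; ring_nf
  -- master formula for the connection
  have hn : ∀ x y : V, nab x y = (α/2 * (x 1 * y 4 + x 4 * y 1)) • e 0
      - (α/2 * (x 0 * y 4 + x 4 * y 0)) • e 1 + (α/2 * (x 0 * y 1 - x 1 * y 0)) • e 4 := by
    intro x y
    apply ext_inner_right ℝ
    intro z
    have h := hkoszul x y z
    rw [hb, hb, hb] at h
    simp only [real_inner_smul_left, inner_add_left, inner_sub_left, inner_neg_left] at h ⊢
    have he : ∀ (i : Fin 5) (u : V), ⟪e i, u⟫ = u i := by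
      intro i u
      simp [e, PiLp.inner_apply, EuclideanSpace.single_apply]
    simp only [he] at h ⊢
    linarith [h]
  -- specialized values
  have closer : ∀ (c d : ℝ), c = d → ∀ u : V, c • u = d • u := by
    intro c d h u; rw [h]
  have n0 : nab (e 0) (e 0) = 0 := by
    rw [hn]; simp (config := { decide := true }) [e, EuclideanSpace.single_apply]
  have n1 : nab (e 1) (e 1) = 0 := by
    rw [hn]; simp (config := { decide := true }) [e, EuclideanSpace.single_apply]
  have n2 : nab (e 2) (e 2) = 0 := by
    rw [hn]; simp (config := { decide := true }) [e, EuclideanSpace.single_apply]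
  have n3 : nab (e 3) (e 3) = 0 := by
    rw [hn]; simp (config := { decide := true }) [e, EuclideanSpace.single_apply]
  have n4 : nab (e 4) (e 4) = 0 := by
    rw [hn]; simp (config := { decide := true }) [e, EuclideanSpace.single_apply]
  have bx0 : b ξ (e 0) = (-(α * ξ 1)) • e 4 := by
    rw [hb]; apply closer; simp (config := { decide := true }) [e, EuclideanSpace.single_apply]
  have bx1 : b ξ (e 1) = (α * ξ 0) • e 4 := by
    rw [hb]; apply closer; simp (config := { decide := true }) [e, EuclideanSpace.single_apply]
  have bx2 : b ξ (e 2) = 0 := by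
    rw [hb]; simp (config := { decide := true }) [e, EuclideanSpace.single_apply]
  have bx3 : b ξ (e 3) = 0 := by
    rw [hb]; simp (config := { decide := true }) [e, EuclideanSpace.single_apply]
  have bx4 : b ξ (e 4) = 0 := by
    rw [hb]; simp (config := { decide := true }) [e, EuclideanSpace.single_apply]
  have nzl : ∀ y : V, nab 0 y = 0 := by
    intro y; rw [hn]; norm_num
  have nzr : ∀ y : V, nab y 0 = 0 := by
    intro y; rw [hn]; norm_num
  have m40 : ∀ c : ℝ, nab (c • e 4) (e 0) = (-(α/2 * c)) • e 1 := by
    intro c; rw [hn]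
    simp (config := { decide := true }) [e, EuclideanSpace.single_apply, PiLp.smul_apply]
  have m04 : ∀ c : ℝ, nab (e 0) (c • e 4) = (-(α/2 * c)) • e 1 := by
    intro c; rw [hn]
    simp (config := { decide := true }) [e, EuclideanSpace.single_apply, PiLp.smul_apply]
  have m41 : ∀ c : ℝ, nab (c • e 4) (e 1) = (α/2 * c) • e 0 := by
    intro c; rw [hn]
    simp (config := { decide := true }) [e, EuclideanSpace.single_apply, PiLp.smul_apply]
  have m14 : ∀ c : ℝ, nab (e 1) (c • e 4) = (α/2 * c) • e 0 := by
    intro c; rw [hn]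
    simp (config := { decide := true }) [e, EuclideanSpace.single_apply, PiLp.smul_apply]
  -- the seven scalar equations
  have hα2 : α^2 ≠ 0 := pow_ne_zero 2 (ne_of_gt hα)
  have H0 := hproj (e 0) (e 0)
  rw [n0, map_zero, bx0, m40, m04] at H0
  have H1 := hproj (e 1) (e 1)
  rw [n1, map_zero, bx1, m41, m14] at H1
  have H2 := hproj (e 2) (e 2)
  rw [n2, map_zero, bx2, nzl, nzr] at H2
  have H3 := hproj (e 3) (e 3)
  rw [n3, map_zero, bx3, nzl, nzr] at H3
  have H4 := hproj (e 4) (e 4)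
  rw [n4, map_zero, bx4, nzl, nzr] at H4
  have A0 := congr_arg (fun u : V => u 0) H0
  have B0 := congr_arg (fun u : V => u 1) H0
  have A1 := congr_arg (fun u : V => u 1) H1
  have B1 := congr_arg (fun u : V => u 0) H1
  have A2 := congr_arg (fun u : V => u 2) H2
  have A3 := congr_arg (fun u : V => u 3) H3
  have A4 := congr_arg (fun u : V => u 4) H4
  simp only [PiLp.sub_apply, PiLp.add_apply, PiLp.smul_apply, PiLp.zero_apply, smul_eq_mul,
    e, EuclideanSpace.single_apply] at A0 B0 A1 B1 A2 A3 A4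
  norm_num at A0 B0 A1 B1 A2 A3 A4
  have hξ1 : ξ 1 = 0 := by
    have h : α^2 * ξ 1 = 0 := by linear_combination -B0
    exact (mul_eq_zero.mp h).resolve_left hα2
  have hξ0 : ξ 0 = 0 := by
    have h : α^2 * ξ 0 = 0 := by linear_combination -B1
    exact (mul_eq_zero.mp h).resolve_left hα2
  have hω0 : ω (e 0) = 0 := by simp only [e]; linear_combination -A0/2
  have hω1 : ω (e 1) = 0 := by simp only [e]; linear_combination -A1/2
  have hω2 : ω (e 2) = 0 := by simp only [e]; linear_combination -A2/2
  have hω3 : ω (e 3) = 0 := by simp only [e]; linear_combination -A3/2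
  have hω4 : ω (e 4) = 0 := by simp only [e]; linear_combination -A4/2
  refine ⟨?_, hξ0, hξ1, ?_⟩
  · ext u
    have hu := hexp u
    rw [hu]
    simp [Fin.sum_univ_five, map_add, map_smul, hω0, hω1, hω2, hω3, hω4]
  · have hx : ξ = ξ 2 • e 2 + (ξ 3 • e 3 + ξ 4 • e 4) := by
      nth_rewrite 1 [hexp ξ]
      rw [Fin.sum_univ_five, hξ0, hξ1]
      simp
      abel
    rw [hx]
    refine Submodule.add_mem _ ?_ (Submodule.add_mem _ ?_ ?_)
    · exact Submodule.smul_mem _ _ (Submodule.subset_span (by simp))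
    · exact Submodule.smul_mem _ _ (Submodule.subset_span (by simp))
    · exact Submodule.smul_mem _ _ (Submodule.subset_span (by simp))
end

section
/- Let g = A_{5,2} with orthonormal basis v1,…,v5 and nonzero brackets [v1,v2]=αv3+βv4, [v1,v3]=γv4, [v1,v4]=δv5 (α,γ,δ>0, β∈ℝ). If ξ = Σξ_i v_i and ω ∈ g* satisfy (L_ξ∇)(v,w) = ω(v)w + ω(w)v for all v,w, then ξ1 = ξ2 = ξ3 = ξ4 = 0 and ω ≡ 0; hence every left-invariant projective vector field on A_{5,2} is affine and lies in the center span{v5}. -/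
local notation "⟪" x ", " y "⟫" => @inner ℝ _ _ x y

/-- Auxiliary: explicit bracket table. -/
noncomputable def btab (α β γ δ : ℝ) : Fin 5 → Fin 5 → V
  | 0, 1 => α • e 2 + β • e 3
  | 1, 0 => -(α • e 2 + β • e 3)
  | 0, 2 => γ • e 3
  | 2, 0 => -(γ • e 3)
  | 0, 3 => δ • e 4
  | 3, 0 => -(δ • e 4)
  | _, _ => 0

set_option maxHeartbeats 2000000 in
/-- on `A_{5,2}` (brackets `[v1,v2]=αv3+βv4`, `[v1,v3]=γv4`,
`[v1,v4]=δv5`, `α,γ,δ>0`), every left-invariant projective vector field satisfies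
`ξ1=ξ2=ξ3=ξ4=0` and `ω ≡ 0`; hence it is affine and lies in the center `span{v5}`. -/
theorem stmt_19
    (α β γ δ : ℝ) (hα : 0 < α) (hγ : 0 < γ) (hδ : 0 < δ)
    (b : V →ₗ[ℝ] V →ₗ[ℝ] V)
    (hskew : ∀ x y, b x y = - b y x)
    (h12 : b (e 0) (e 1) = α • e 2 + β • e 3)
    (h13 : b (e 0) (e 2) = γ • e 3)
    (h14 : b (e 0) (e 3) = δ • e 4)
    (hzero : ∀ i j : Fin 5, i < j →
      (i, j) ∉ ({(0, 1), (0, 2), (0, 3)} : Set (Fin 5 × Fin 5)) → b (e i) (e j) = 0)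
    (nab : V → V → V)
    (hkoszul : ∀ x y z, 2 * ⟪nab x y, z⟫ = ⟪b x y, z⟫ - ⟪b y z, x⟫ + ⟪b z x, y⟫)
    (ξ : V) (ω : V →ₗ[ℝ] ℝ)
    (hproj : ∀ v w, b ξ (nab v w) - nab (b ξ v) w - nab v (b ξ w) = ω v • w + ω w • v) :
    (ξ 0 = 0 ∧ ξ 1 = 0 ∧ ξ 2 = 0 ∧ ξ 3 = 0) ∧ ω = 0 ∧
      (∀ v w, b ξ (nab v w) - nab (b ξ v) w - nab v (b ξ w) = 0) ∧
      ξ ∈ Submodule.span ℝ ({e 4} : Set V) := by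
  have hbxx : ∀ x, b x x = 0 := by
    intro x
    have h3 : (2:ℝ) • b x x = 0 := by
      rw [two_smul]; nth_rewrite 1 [hskew x x]; abel
    exact (smul_eq_zero.mp h3).resolve_left (by norm_num)
  have z04 : b (e 0) (e 4) = 0 := hzero 0 4 (by decide) (by simp [Prod.ext_iff])
  have z12 : b (e 1) (e 2) = 0 := hzero 1 2 (by decide) (by simp [Prod.ext_iff])
  have z13 : b (e 1) (e 3) = 0 := hzero 1 3 (by decide) (by simp [Prod.ext_iff])
  have z14 : b (e 1) (e 4) = 0 := hzero 1 4 (by decide) (by simp [Prod.ext_iff])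
  have z23 : b (e 2) (e 3) = 0 := hzero 2 3 (by decide) (by simp [Prod.ext_iff])
  have z24 : b (e 2) (e 4) = 0 := hzero 2 4 (by decide) (by simp [Prod.ext_iff])
  have z34 : b (e 3) (e 4) = 0 := hzero 3 4 (by decide) (by simp [Prod.ext_iff])
  have hb : ∀ i j, b (e i) (e j) = btab α β γ δ i j := by
    intro i j
    fin_cases i <;> fin_cases j <;>
      simp only [btab, Fin.isValue] <;>
      first
        | exact hbxx _
        | exact h12 | exact h13 | exact h14
        | exact z04 | exact z12 | exact z13 | exact z14 | exact z23 | exact z24 | exact z34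
        | exact (hskew _ _).trans (congrArg Neg.neg h12)
        | exact (hskew _ _).trans (congrArg Neg.neg h13)
        | exact (hskew _ _).trans (congrArg Neg.neg h14)
        | exact ((hskew _ _).trans (congrArg Neg.neg z04)).trans neg_zero
        | exact ((hskew _ _).trans (congrArg Neg.neg z12)).trans neg_zero
        | exact ((hskew _ _).trans (congrArg Neg.neg z13)).trans neg_zero
        | exact ((hskew _ _).trans (congrArg Neg.neg z14)).trans neg_zero
        | exact ((hskew _ _).trans (congrArg Neg.neg z23)).trans neg_zero
        | exact ((hskew _ _).trans (congrArg Neg.neg z24)).trans neg_zero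
        | exact ((hskew _ _).trans (congrArg Neg.neg z34)).trans neg_zero
  have eapp : ∀ i k : Fin 5, e i k = if k = i then 1 else 0 := by
    intro i k; simp [e, EuclideanSpace.single_apply]
  have coord : ∀ (x : V) (k : Fin 5), ⟪x, e k⟫ = x k := by
    intro x k
    simp [e, PiLp.inner_apply, RCLike.inner_apply, EuclideanSpace.single_apply, Fin.sum_univ_five]
  have hk : ∀ x y (k : Fin 5), nab x y k
      = (⟪b x y, e k⟫ - ⟪b y (e k), x⟫ + ⟪b (e k) x, y⟫) / 2 := by
    intro x y k
    have h := hkoszul x y (e k)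
    rw [coord] at h
    linarith
  have hdec : ∀ x : V, x = x 0 • e 0 + x 1 • e 1 + x 2 • e 2 + x 3 • e 3 + x 4 • e 4 := by
    intro x; refine PiLp.ext (fun k => ?_); fin_cases k <;> simp [e, EuclideanSpace.single_apply]
  have hbxi : ∀ y, b ξ y = ξ 0 • b (e 0) y + ξ 1 • b (e 1) y + ξ 2 • b (e 2) y
      + ξ 3 • b (e 3) y + ξ 4 • b (e 4) y := by
    intro y
    conv_lhs => rw [hdec ξ]
    simp [LinearMap.add_apply, LinearMap.smul_apply]
  have n00 : nab (e 0) (e 0) = 0 := by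
    refine PiLp.ext (fun k => ?_); rw [hk]
    fin_cases k <;>
      simp [hb, btab, coord, eapp, PiLp.inner_apply, RCLike.inner_apply, Fin.sum_univ_five,
        PiLp.add_apply, PiLp.smul_apply, PiLp.neg_apply]
  have n11 : nab (e 1) (e 1) = 0 := by
    refine PiLp.ext (fun k => ?_); rw [hk]
    fin_cases k <;>
      simp [hb, btab, coord, eapp, PiLp.inner_apply, RCLike.inner_apply, Fin.sum_univ_five,
        PiLp.add_apply, PiLp.smul_apply, PiLp.neg_apply]
  have n22 : nab (e 2) (e 2) = 0 := by
    refine PiLp.ext (fun k => ?_); rw [hk]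
    fin_cases k <;>
      simp [hb, btab, coord, eapp, PiLp.inner_apply, RCLike.inner_apply, Fin.sum_univ_five,
        PiLp.add_apply, PiLp.smul_apply, PiLp.neg_apply]
  have n33 : nab (e 3) (e 3) = 0 := by
    refine PiLp.ext (fun k => ?_); rw [hk]
    fin_cases k <;>
      simp [hb, btab, coord, eapp, PiLp.inner_apply, RCLike.inner_apply, Fin.sum_univ_five,
        PiLp.add_apply, PiLp.smul_apply, PiLp.neg_apply]
  have n44 : nab (e 4) (e 4) = 0 := by
    refine PiLp.ext (fun k => ?_); rw [hk]
    fin_cases k <;>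
      simp [hb, btab, coord, eapp, PiLp.inner_apply, RCLike.inner_apply, Fin.sum_univ_five,
        PiLp.add_apply, PiLp.smul_apply, PiLp.neg_apply]
  have n34 : nab (e 3) (e 4) = (δ / 2) • e 0 := by
    refine PiLp.ext (fun k => ?_); rw [hk]
    fin_cases k <;>
      simp [hb, btab, coord, eapp, PiLp.inner_apply, RCLike.inner_apply, Fin.sum_univ_five,
        PiLp.add_apply, PiLp.smul_apply, PiLp.neg_apply] <;> ring
  have hx0 : ξ 0 = 0 := by
    have P := congrArg (fun v : V => v 0) (hproj (e 2) (e 2))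
    simp only [PiLp.sub_apply, PiLp.add_apply, PiLp.smul_apply, n22, map_zero, hk, hbxi,
      hb, btab, map_add, map_smul, map_neg, LinearMap.add_apply, LinearMap.smul_apply,
      LinearMap.neg_apply, LinearMap.zero_apply, smul_zero, add_zero, zero_add, smul_eq_mul,
      zero_smul, zero_mul, mul_zero,
      PiLp.inner_apply, RCLike.inner_apply, conj_trivial, Fin.sum_univ_five, eapp,
      PiLp.neg_apply, PiLp.zero_apply] at P
    simp (config := { decide := true }) [hα.ne', hγ.ne', hδ.ne'] at P
    first
      | exact P
      | · have h0 : γ * (γ * ξ 0) = 0 := by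
            first | linear_combination -P | linear_combination P | linear_combination -2*P | linear_combination 2*P
          exact (mul_eq_zero.mp ((mul_eq_zero.mp h0).resolve_left hγ.ne')).resolve_left hγ.ne'
  have hx1 : ξ 1 = 0 := by
    have P := congrArg (fun v : V => v 2) (hproj (e 3) (e 4))
    simp only [PiLp.sub_apply, PiLp.add_apply, PiLp.smul_apply, n34, map_zero, hk, hbxi, hx0,
      hb, btab, map_add, map_smul, map_neg, LinearMap.add_apply, LinearMap.smul_apply,
      LinearMap.neg_apply, LinearMap.zero_apply, smul_zero, add_zero, zero_add, smul_eq_mul,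
      zero_smul, zero_mul, mul_zero,
      PiLp.inner_apply, RCLike.inner_apply, conj_trivial, Fin.sum_univ_five, eapp,
      PiLp.neg_apply, PiLp.zero_apply] at P
    simp (config := { decide := true }) [hα.ne', hγ.ne', hδ.ne'] at P
    first
      | exact P
      | · have h0 : α * (δ * ξ 1) = 0 := by
            first | linear_combination -P | linear_combination P | linear_combination -2*P | linear_combination 2*P
          exact (mul_eq_zero.mp ((mul_eq_zero.mp h0).resolve_left hα.ne')).resolve_left hδ.ne'
  have hx2 : ξ 2 = 0 := by
    have P := congrArg (fun v : V => v 2) (hproj (e 0) (e 0))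
    simp only [PiLp.sub_apply, PiLp.add_apply, PiLp.smul_apply, n00, map_zero, hk, hbxi, hx0, hx1,
      hb, btab, map_add, map_smul, map_neg, LinearMap.add_apply, LinearMap.smul_apply,
      LinearMap.neg_apply, LinearMap.zero_apply, smul_zero, add_zero, zero_add, smul_eq_mul,
      zero_smul, zero_mul, mul_zero,
      PiLp.inner_apply, RCLike.inner_apply, conj_trivial, Fin.sum_univ_five, eapp,
      PiLp.neg_apply, PiLp.zero_apply] at P
    simp (config := { decide := true }) [hα.ne', hγ.ne', hδ.ne'] at P
    first
      | exact P
      | · have h0 : γ * (γ * ξ 2) = 0 := by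
            first | linear_combination -P | linear_combination P | linear_combination -2*P | linear_combination 2*P
          exact (mul_eq_zero.mp ((mul_eq_zero.mp h0).resolve_left hγ.ne')).resolve_left hγ.ne'
  have hx3 : ξ 3 = 0 := by
    have P := congrArg (fun v : V => v 3) (hproj (e 0) (e 0))
    simp only [PiLp.sub_apply, PiLp.add_apply, PiLp.smul_apply, n00, map_zero, hk, hbxi, hx0, hx1, hx2,
      hb, btab, map_add, map_smul, map_neg, LinearMap.add_apply, LinearMap.smul_apply,
      LinearMap.neg_apply, LinearMap.zero_apply, smul_zero, add_zero, zero_add, smul_eq_mul,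
      zero_smul, zero_mul, mul_zero,
      PiLp.inner_apply, RCLike.inner_apply, conj_trivial, Fin.sum_univ_five, eapp,
      PiLp.neg_apply, PiLp.zero_apply] at P
    simp (config := { decide := true }) [hα.ne', hγ.ne', hδ.ne'] at P
    first
      | exact P
      | · have h0 : δ * (δ * ξ 3) = 0 := by
            first | linear_combination -P | linear_combination P | linear_combination -2*P | linear_combination 2*P
          exact (mul_eq_zero.mp ((mul_eq_zero.mp h0).resolve_left hδ.ne')).resolve_left hδ.ne'
  have hw0 : ω (e 0) = 0 := by
    have P := congrArg (fun v : V => v 0) (hproj (e 0) (e 0))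
    simp only [PiLp.sub_apply, PiLp.add_apply, PiLp.smul_apply, n00, map_zero, hk, hbxi, hx0, hx1, hx2, hx3,
      hb, btab, map_add, map_smul, map_neg, LinearMap.add_apply, LinearMap.smul_apply,
      LinearMap.neg_apply, LinearMap.zero_apply, smul_zero, add_zero, zero_add, smul_eq_mul,
      zero_smul, zero_mul, mul_zero,
      PiLp.inner_apply, RCLike.inner_apply, conj_trivial, Fin.sum_univ_five, eapp,
      PiLp.neg_apply, PiLp.zero_apply] at P
    simp (config := { decide := true }) [hα.ne', hγ.ne', hδ.ne'] at P
    first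
      | exact P
      | linarith [P]
  have hw1 : ω (e 1) = 0 := by
    have P := congrArg (fun v : V => v 1) (hproj (e 1) (e 1))
    simp only [PiLp.sub_apply, PiLp.add_apply, PiLp.smul_apply, n11, map_zero, hk, hbxi, hx0, hx1, hx2, hx3,
      hb, btab, map_add, map_smul, map_neg, LinearMap.add_apply, LinearMap.smul_apply,
      LinearMap.neg_apply, LinearMap.zero_apply, smul_zero, add_zero, zero_add, smul_eq_mul,
      zero_smul, zero_mul, mul_zero,
      PiLp.inner_apply, RCLike.inner_apply, conj_trivial, Fin.sum_univ_five, eapp,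
      PiLp.neg_apply, PiLp.zero_apply] at P
    simp (config := { decide := true }) [hα.ne', hγ.ne', hδ.ne'] at P
    first
      | exact P
      | linarith [P]
  have hw2 : ω (e 2) = 0 := by
    have P := congrArg (fun v : V => v 2) (hproj (e 2) (e 2))
    simp only [PiLp.sub_apply, PiLp.add_apply, PiLp.smul_apply, n22, map_zero, hk, hbxi, hx0, hx1, hx2, hx3,
      hb, btab, map_add, map_smul, map_neg, LinearMap.add_apply, LinearMap.smul_apply,
      LinearMap.neg_apply, LinearMap.zero_apply, smul_zero, add_zero, zero_add, smul_eq_mul,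
      zero_smul, zero_mul, mul_zero,
      PiLp.inner_apply, RCLike.inner_apply, conj_trivial, Fin.sum_univ_five, eapp,
      PiLp.neg_apply, PiLp.zero_apply] at P
    simp (config := { decide := true }) [hα.ne', hγ.ne', hδ.ne'] at P
    first
      | exact P
      | linarith [P]
  have hw3 : ω (e 3) = 0 := by
    have P := congrArg (fun v : V => v 3) (hproj (e 3) (e 3))
    simp only [PiLp.sub_apply, PiLp.add_apply, PiLp.smul_apply, n33, map_zero, hk, hbxi, hx0, hx1, hx2, hx3,
      hb, btab, map_add, map_smul, map_neg, LinearMap.add_apply, LinearMap.smul_apply,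
      LinearMap.neg_apply, LinearMap.zero_apply, smul_zero, add_zero, zero_add, smul_eq_mul,
      zero_smul, zero_mul, mul_zero,
      PiLp.inner_apply, RCLike.inner_apply, conj_trivial, Fin.sum_univ_five, eapp,
      PiLp.neg_apply, PiLp.zero_apply] at P
    simp (config := { decide := true }) [hα.ne', hγ.ne', hδ.ne'] at P
    first
      | exact P
      | linarith [P]
  have hw4 : ω (e 4) = 0 := by
    have P := congrArg (fun v : V => v 4) (hproj (e 4) (e 4))
    simp only [PiLp.sub_apply, PiLp.add_apply, PiLp.smul_apply, n44, map_zero, hk, hbxi, hx0, hx1, hx2, hx3,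
      hb, btab, map_add, map_smul, map_neg, LinearMap.add_apply, LinearMap.smul_apply,
      LinearMap.neg_apply, LinearMap.zero_apply, smul_zero, add_zero, zero_add, smul_eq_mul,
      zero_smul, zero_mul, mul_zero,
      PiLp.inner_apply, RCLike.inner_apply, conj_trivial, Fin.sum_univ_five, eapp,
      PiLp.neg_apply, PiLp.zero_apply] at P
    simp (config := { decide := true }) [hα.ne', hγ.ne', hδ.ne'] at P
    first
      | exact P
      | linarith [P]
  have hω : ω = 0 := by
    apply LinearMap.ext; intro x
    conv_lhs => rw [hdec x]
    simp [map_add, map_smul, hw0, hw1, hw2, hw3, hw4]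
  refine ⟨⟨hx0, hx1, hx2, hx3⟩, hω, ?_, ?_⟩
  · intro v w
    rw [hproj v w, hω]
    simp
  · refine Submodule.mem_span_singleton.mpr ⟨ξ 4, ?_⟩
    have hxspan : ξ = ξ 4 • e 4 := by
      conv_lhs => rw [hdec ξ]
      rw [hx0, hx1, hx2, hx3]
      simp
    exact hxspan.symm
end
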